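/- For any constant c₀ with 0 < c₀ < 1/λ₊ + 1/λ₋ there exists c₁ > 0 such that for all sufficiently small λ > 0, E[exp(λ(c₀·n − T_{2n}))] ≤ (1 − c₁λ)^n < 1 for all n ≥ 1. -/

import Mathlib

open MeasureTheory ProbabilityTheory Real Filter

open scoped NNReal ENNReal

section Aux

lemma expPDFReal_eq_aux (r x : ℝ) :
    exponentialPDFReal r x = if 0 ≤ x then r * exp (-(r * x)) else 0 := by
  rw [exponentialPDFReal, gammaPDFReal]
  simp only [rpow_one, Real.Gamma_one, div_one, sub_self, rpow_zero, mul_one]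

lemma exp_mgf_aux {r lam : ℝ} (hr : 0 < r) (hlam : 0 ≤ lam) :
    ∫ x, exp (-lam * x) ∂(expMeasure r) = r / (r + lam) := by
  have hd : expMeasure r
      = volume.withDensity (fun x => ((Real.toNNReal (exponentialPDFReal r x) : ℝ≥0) : ℝ≥0∞)) := by
    rfl
  rw [hd, integral_withDensity_eq_integral_smul
      ((measurable_exponentialPDFReal r).real_toNNReal)]
  have h1 : (fun x => (Real.toNNReal (exponentialPDFReal r x)) • exp (-lam * x))
      = Set.indicator (Set.Ici (0:ℝ)) (fun x => r * exp (-((r + lam) * x))) := by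
    ext x
    by_cases h : 0 ≤ x
    · simp only [NNReal.smul_def, expPDFReal_eq_aux, if_pos h,
        Set.indicator_of_mem (Set.mem_Ici.2 h), smul_eq_mul]
      rw [Real.coe_toNNReal _ (by positivity), mul_assoc, ← Real.exp_add]
      ring_nf
    · simp [NNReal.smul_def, Real.coe_toNNReal _ (exponentialPDFReal_nonneg hr x),
        expPDFReal_eq_aux, if_neg h, Set.indicator_of_notMem (fun hx => h (Set.mem_Ici.1 hx))]
  rw [h1, integral_indicator measurableSet_Ici, integral_Ici_eq_integral_Ioi,
    integral_const_mul]
  have h2 : ∫ x in Set.Ioi (0:ℝ), exp (-((r + lam) * x))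
      = (r + lam)⁻¹ * 1 := by
    have := integral_comp_mul_left_Ioi (fun y => exp (-y)) 0 (by linarith : 0 < r + lam)
    simp only [mul_zero, smul_eq_mul] at this
    rw [this, integral_exp_neg_Ioi_zero]
  rw [h2]
  field_simp

lemma keyAB_aux {A B c₀ c₁ x : ℝ} (hA : 0 < A) (hB : 0 < B) (hc₀ : 0 < c₀) (hc₁ : 0 < c₁)
    (hsum : c₀ + 2 * c₁ ≤ A + B) (h1 : (c₀ + c₁) * x ≤ 1)
    (h2 : (c₀ + c₁) * (A + B) * x ≤ c₁) (hx : 0 ≤ x) :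
    1 ≤ (1 - c₀ * x) * (1 - c₁ * x) * (1 + A * x) * (1 + B * x) := by
  have hxx : 0 ≤ x * x := mul_nonneg hx hx
  have hP : 1 - (c₀ + c₁) * x ≤ (1 - c₀ * x) * (1 - c₁ * x) := by
    nlinarith [mul_nonneg (mul_nonneg hc₀.le hc₁.le) hxx]
  have hP0 : 0 ≤ 1 - (c₀ + c₁) * x := by linarith
  have hQ : 1 + (A + B) * x ≤ (1 + A * x) * (1 + B * x) := by
    nlinarith [mul_nonneg (mul_nonneg hA.le hB.le) hxx]
  have hQ0 : (0:ℝ) ≤ 1 + (A + B) * x := by nlinarith [mul_nonneg (add_pos hA hB).le hx]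
  calc (1:ℝ) ≤ (1 - (c₀ + c₁) * x) * (1 + (A + B) * x) := by nlinarith
    _ ≤ ((1 - c₀ * x) * (1 - c₁ * x)) * ((1 + A * x) * (1 + B * x)) :=
        mul_le_mul hP hQ hQ0 (le_trans hP0 hP)
    _ = (1 - c₀ * x) * (1 - c₁ * x) * (1 + A * x) * (1 + B * x) := by ring

lemma expb_aux {y : ℝ} (hy : y < 1) : exp y ≤ (1 - y)⁻¹ := by
  have h := Real.add_one_le_exp (-y)
  have h0 : 0 < 1 - y := by linarith
  have h2 : exp y * (1 - y) ≤ 1 := by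
    have h3 := mul_le_mul_of_nonneg_left h (exp_pos y).le
    rw [← Real.exp_add, add_neg_cancel, Real.exp_zero] at h3
    linarith
  rw [inv_eq_one_div, le_div_iff₀ h0]
  exact h2

end Aux

theorem stmt_5
    {Ω : Type*} [MeasurableSpace Ω] (P : Measure Ω) [IsProbabilityMeasure P]
    (lamp lamm : ℝ) (hlamp : 0 < lamp) (hlamm : 0 < lamm)
    (ξ : ℕ → Ω → ℝ)
    (hindep : iIndepFun ξ P)
    (h0 : Measure.map (ξ 0) P = expMeasure lamm)
    (hS : ∀ i : ℕ, Measure.map (ξ (2 * i + 1)) P = expMeasure lamp)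
    (hU : ∀ i : ℕ, Measure.map (ξ (2 * i + 2)) P = expMeasure lamm)
    (T : ℕ → Ω → ℝ)
    (hT : ∀ n ω, T n ω = ∑ j ∈ Finset.range (2 * n + 1), ξ j ω)
    (c₀ : ℝ) (hc₀ : 0 < c₀) (hc₀' : c₀ < 1 / lamp + 1 / lamm) :
    ∃ c₁ > 0, ∃ lam₀ > 0, ∀ lam : ℝ, 0 < lam → lam < lam₀ → ∀ n : ℕ, 1 ≤ n →
      (∫ ω, Real.exp (lam * (c₀ * n - T n ω)) ∂P) ≤ (1 - c₁ * lam) ^ n ∧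
        (1 - c₁ * lam) ^ n < 1 := by
  have hA : (0:ℝ) < 1 / lamp := by positivity
  have hB : (0:ℝ) < 1 / lamm := by positivity
  set c₁ : ℝ := (1 / lamp + 1 / lamm - c₀) / 2 with hc₁def
  have hc₁ : 0 < c₁ := by rw [hc₁def]; linarith
  refine ⟨c₁, hc₁, min (c₁ / ((c₀ + c₁) * (1 / lamp + 1 / lamm))) (1 / (c₀ + c₁)),
    lt_min (by positivity) (by positivity), ?_⟩
  intro lam hlam hlam₀ n hn
  -- rates
  set R : ℕ → ℝ := fun j => if Odd j then lamp else lamm with hRdef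
  have hR : ∀ j, 0 < R j := by
    intro j; by_cases h : Odd j <;> simp [hRdef, h, hlamp, hlamm]
  have hmap : ∀ j, Measure.map (ξ j) P = expMeasure (R j) := by
    intro j
    by_cases h : Odd j
    · obtain ⟨k, hk⟩ := h
      subst hk
      simpa [hRdef, (⟨k, rfl⟩ : Odd (2 * k + 1))] using hS k
    · have he : Even j := Nat.not_odd_iff_even.1 h
      obtain ⟨k, hk⟩ := he
      subst hk
      match k with
      | 0 => simpa [hRdef] using h0
      | Nat.succ m =>
        have hh : m + 1 + (m + 1) = 2 * m + 2 := by ring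
        rw [hh]
        have : ¬ Odd (2 * m + 2) := by
          rw [hh] at h; exact h
        simpa [hRdef, this] using hU m
  have hAE : ∀ j, AEMeasurable (ξ j) P := by
    intro j
    by_contra h
    have h1 := hmap j
    rw [Measure.map_of_not_aemeasurable h] at h1
    have : IsProbabilityMeasure (expMeasure (R j)) := isProbabilityMeasure_expMeasure (hR j)
    exact (IsProbabilityMeasure.ne_zero (expMeasure (R j))) h1.symm
  set ξ' : ℕ → Ω → ℝ := fun j => (hAE j).mk (ξ j) with hξ'def
  have hmeas' : ∀ j, Measurable (ξ' j) := fun j => (hAE j).measurable_mk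
  have heq : ∀ j, ξ j =ᵐ[P] ξ' j := fun j => (hAE j).ae_eq_mk
  have hmap' : ∀ j, Measure.map (ξ' j) P = expMeasure (R j) := by
    intro j
    rw [← Measure.map_congr (heq j)]
    exact hmap j
  have hindep' : iIndepFun ξ' P := by
    rw [iIndepFun_iff_measure_inter_preimage_eq_mul] at hindep ⊢
    intro S sets hsets
    have hpre : ∀ i, (ξ' i ⁻¹' sets i) =ᵐ[P] (ξ i ⁻¹' sets i) := by
      intro i
      filter_upwards [heq i] with ω hω
      show (ξ' i ω ∈ sets i) = (ξ i ω ∈ sets i)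
      rw [hω]
    have hint : (⋂ i ∈ S, ξ' i ⁻¹' sets i) =ᵐ[P] (⋂ i ∈ S, ξ i ⁻¹' sets i) := by
      have hall : ∀ᵐ ω ∂P, ∀ i ∈ S, ξ i ω = ξ' i ω :=
        (eventually_all_finset S).2 fun i _ => heq i
      filter_upwards [hall] with ω hω
      show (ω ∈ ⋂ i ∈ S, ξ' i ⁻¹' sets i) = (ω ∈ ⋂ i ∈ S, ξ i ⁻¹' sets i)
      simp only [Set.mem_iInter, Set.mem_preimage, eq_iff_iff]
      constructor
      · intro h i hi; rw [hω i hi]; exact h i hi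
      · intro h i hi; rw [← hω i hi]; exact h i hi
    rw [measure_congr hint, hindep S hsets]
    exact Finset.prod_congr rfl fun i _ => (measure_congr (hpre i)).symm
  -- the single factor mgf
  have hfac : ∀ j, mgf (ξ' j) P (-lam) = R j / (R j + lam) := by
    intro j
    calc mgf (ξ' j) P (-lam) = ∫ ω, exp (-lam * ξ' j ω) ∂P := rfl
      _ = ∫ x, exp (-lam * x) ∂(Measure.map (ξ' j) P) :=
          (integral_map (hmeas' j).aemeasurable
            ((measurable_id.const_mul (-lam)).exp.aestronglyMeasurable)).symm
      _ = R j / (R j + lam) := by rw [hmap' j]; exact exp_mgf_aux (hR j) hlam.le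
  -- the product
  have hprodn : ∀ m : ℕ, ∏ j ∈ Finset.range (2 * m + 1), (R j / (R j + lam))
      = (lamm / (lamm + lam)) ^ (m + 1) * (lamp / (lamp + lam)) ^ m := by
    intro m
    induction m with
    | zero => simp [hRdef]
    | succ k ih =>
      have h21 : 2 * (k + 1) + 1 = (2 * k + 1) + 1 + 1 := by ring
      rw [h21, Finset.prod_range_succ, Finset.prod_range_succ, ih]
      have hodd : Odd (2 * k + 1) := ⟨k, by ring⟩
      have heven : ¬ Odd (2 * k + 1 + 1) :=
        Nat.not_odd_iff_even.2 ⟨k + 1, by ring⟩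
      simp only [hRdef, if_pos hodd, if_neg heven]
      ring
  -- main identity
  have hE : ∫ ω, exp (lam * (c₀ * n - T n ω)) ∂P
      = exp (lam * c₀ * n) * ∏ j ∈ Finset.range (2 * n + 1), (R j / (R j + lam)) := by
    have hae : ∀ᵐ ω ∂P, exp (lam * (c₀ * n - T n ω))
        = exp (lam * c₀ * n) * exp ((-lam) * (∑ j ∈ Finset.range (2 * n + 1), ξ' j) ω) := by
      have hall : ∀ᵐ ω ∂P, ∀ j ∈ Finset.range (2 * n + 1), ξ j ω = ξ' j ω :=
        (eventually_all_finset _).2 fun j _ => heq j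
      filter_upwards [hall] with ω hω
      have hsum : T n ω = (∑ j ∈ Finset.range (2 * n + 1), ξ' j) ω := by
        rw [hT n ω, Finset.sum_apply]
        exact Finset.sum_congr rfl hω
      rw [hsum, ← Real.exp_add]
      congr 1
      ring
    rw [integral_congr_ae hae, integral_const_mul]
    have hmgf : ∫ ω, exp ((-lam) * (∑ j ∈ Finset.range (2 * n + 1), ξ' j) ω) ∂P
        = mgf (∑ j ∈ Finset.range (2 * n + 1), ξ' j) P (-lam) := rfl
    rw [hmgf, hindep'.mgf_sum hmeas']
    congr 1
    exact Finset.prod_congr rfl fun j _ => hfac j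
  -- bounds on lam
  have hlam1 : lam < 1 / (c₀ + c₁) := lt_of_lt_of_le hlam₀ (min_le_right _ _)
  have hlam2 : lam < c₁ / ((c₀ + c₁) * (1 / lamp + 1 / lamm)) :=
    lt_of_lt_of_le hlam₀ (min_le_left _ _)
  have h1 : (c₀ + c₁) * lam ≤ 1 := by
    have := (lt_div_iff₀ (by positivity : (0:ℝ) < c₀ + c₁)).1 hlam1
    nlinarith
  have h2 : (c₀ + c₁) * (1 / lamp + 1 / lamm) * lam ≤ c₁ := by
    have := (lt_div_iff₀ (by positivity : (0:ℝ) < (c₀ + c₁) * (1 / lamp + 1 / lamm))).1 hlam2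
    nlinarith
  have hsum : c₀ + 2 * c₁ ≤ 1 / lamp + 1 / lamm := by rw [hc₁def]; linarith
  have hkey := keyAB_aux hA hB hc₀ hc₁ hsum h1 h2 hlam.le
  have hc₀lam : c₀ * lam < 1 := by nlinarith
  have h1mc₀ : 0 < 1 - c₀ * lam := by linarith
  have h1mc₁ : 0 < 1 - c₁ * lam := by nlinarith
  have hplam : 0 < lamp + lam := by linarith
  have hmlam : 0 < lamm + lam := by linarith
  -- per-factor bound
  have hineq : (1 - c₀ * lam)⁻¹ * (lamp / (lamp + lam) * (lamm / (lamm + lam)))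
      ≤ 1 - c₁ * lam := by
    have hrw : (1 - c₀ * lam)⁻¹ * (lamp / (lamp + lam) * (lamm / (lamm + lam)))
        = (lamp * lamm) / ((1 - c₀ * lam) * ((lamp + lam) * (lamm + lam))) := by
      field_simp
    rw [hrw, div_le_iff₀ (by positivity)]
    have ep : lamp + lam = lamp * (1 + (1 / lamp) * lam) := by field_simp
    have em : lamm + lam = lamm * (1 + (1 / lamm) * lam) := by field_simp
    calc lamp * lamm = lamp * lamm * 1 := by ring
      _ ≤ lamp * lamm
          * ((1 - c₀ * lam) * (1 - c₁ * lam) * (1 + (1 / lamp) * lam) * (1 + (1 / lamm) * lam)) :=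
        mul_le_mul_of_nonneg_left hkey (by positivity)
      _ = (1 - c₁ * lam) * ((1 - c₀ * lam) * ((lamp + lam) * (lamm + lam))) := by
        rw [ep, em]; ring
  have hexp : exp (lam * c₀) ≤ (1 - c₀ * lam)⁻¹ := by
    rw [mul_comm]
    exact expb_aux hc₀lam
  have hfinal : exp (lam * c₀) * (lamm / (lamm + lam)) * (lamp / (lamp + lam))
      ≤ 1 - c₁ * lam := by
    calc exp (lam * c₀) * (lamm / (lamm + lam)) * (lamp / (lamp + lam))
        = exp (lam * c₀) * (lamp / (lamp + lam) * (lamm / (lamm + lam))) := by ring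
      _ ≤ (1 - c₀ * lam)⁻¹ * (lamp / (lamp + lam) * (lamm / (lamm + lam))) :=
          mul_le_mul_of_nonneg_right hexp (by positivity)
      _ ≤ 1 - c₁ * lam := hineq
  -- assemble
  have hb0 : (0:ℝ) ≤ lamm / (lamm + lam) := by positivity
  have hb1 : lamm / (lamm + lam) ≤ 1 := by
    rw [div_le_one hmlam]; linarith
  constructor
  · rw [hE, hprodn n]
    have hexpn : exp (lam * c₀ * n) = exp (lam * c₀) ^ n := by
      rw [mul_comm (lam * c₀) (n:ℝ), Real.exp_nat_mul]
    rw [hexpn]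
    calc exp (lam * c₀) ^ n * ((lamm / (lamm + lam)) ^ (n + 1) * (lamp / (lamp + lam)) ^ n)
        ≤ exp (lam * c₀) ^ n * ((lamm / (lamm + lam)) ^ n * (lamp / (lamp + lam)) ^ n) := by
          apply mul_le_mul_of_nonneg_left _ (by positivity)
          apply mul_le_mul_of_nonneg_right _ (by positivity)
          exact pow_le_pow_of_le_one hb0 hb1 (Nat.le_succ n)
      _ = (exp (lam * c₀) * (lamm / (lamm + lam)) * (lamp / (lamp + lam))) ^ n := by ring
      _ ≤ (1 - c₁ * lam) ^ n := pow_le_pow_left₀ (by positivity) hfinal n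
  · have hlt1 : 1 - c₁ * lam < 1 := sub_lt_self 1 (mul_pos hc₁ hlam)
    have hne : n ≠ 0 := Nat.one_le_iff_ne_zero.1 hn
    exact pow_lt_one₀ h1mc₁.le hlt1 hne
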